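/- Let a ≥ 1. Suppose w : (0,1] → ℝ is continuous, differentiable on (0,1), satisfies 0 ≤ w(x) ≤ 1 for all x ∈ (0,1], solves √(Δ_a(w(x)))·w'(x) = −(1−w(x)²)/x on (0,1), and w(1) = 0. Then (1−y^{2/a})/(1+y^{2/a}) ≤ w(y) ≤ (1−y²)/(1+y²) for all y ∈ (0,1]. -/

import Mathlib

open Filter Set

/-- For `a ≥ 1`, a solution of the uniformization ODE with `0 ≤ w ≤ 1` and `w 1 = 0`
satisfies `(1-y^(2/a))/(1+y^(2/a)) ≤ w(y) ≤ (1-y²)/(1+y²)` on `(0,1]`. -/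
theorem stmt_4 (a : ℝ) (ha : 1 ≤ a) (w : ℝ → ℝ)
    (hcont : ContinuousOn w (Set.Ioc (0:ℝ) 1))
    (hdiff : ∀ x ∈ Set.Ioo (0:ℝ) 1, DifferentiableAt ℝ w x)
    (hbound : ∀ x ∈ Set.Ioc (0:ℝ) 1, 0 ≤ w x ∧ w x ≤ 1)
    (hode : ∀ x ∈ Set.Ioo (0:ℝ) 1,
      Real.sqrt ((1 - a^2) * (w x)^2 + a^2) * deriv w x = -(1 - (w x)^2) / x)
    (hw1 : w 1 = 0) :
    ∀ y ∈ Set.Ioc (0:ℝ) 1,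
      (1 - y ^ (2 / a)) / (1 + y ^ (2 / a)) ≤ w y ∧ w y ≤ (1 - y^2) / (1 + y^2) := by
  have ha0 : (0:ℝ) < a := lt_of_lt_of_le one_pos ha
  set s : ℝ → ℝ := fun x => Real.sqrt ((1 - a^2) * (w x)^2 + a^2) with hs_def
  have hs_bounds : ∀ x ∈ Set.Ioc (0:ℝ) 1, 1 ≤ s x ∧ s x ≤ a := by
    intro x hx
    obtain ⟨h0, h1⟩ := hbound x hx
    constructor
    · have h : (1:ℝ) ≤ (1 - a^2) * (w x)^2 + a^2 := by
        nlinarith [mul_nonneg (by nlinarith : (0:ℝ) ≤ a^2 - 1) (by nlinarith : (0:ℝ) ≤ 1 - (w x)^2)]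
      calc (1:ℝ) = Real.sqrt 1 := by simp
        _ ≤ s x := Real.sqrt_le_sqrt h
    · have h : (1 - a^2) * (w x)^2 + a^2 ≤ a^2 := by
        nlinarith [mul_nonneg (by nlinarith : (0:ℝ) ≤ a^2 - 1) (sq_nonneg (w x))]
      calc s x ≤ Real.sqrt (a^2) := Real.sqrt_le_sqrt h
        _ = a := by rw [Real.sqrt_sq ha0.le]
  have hspos : ∀ x ∈ Set.Ioc (0:ℝ) 1, 0 < s x := fun x hx =>
    lt_of_lt_of_le one_pos (hs_bounds x hx).1
  set P : ℝ → ℝ := fun x => (1 - w x) / (1 + w x) with hP_def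
  have h1w : ∀ x ∈ Set.Ioc (0:ℝ) 1, 0 < 1 + w x := fun x hx => by
    have := (hbound x hx).1; linarith
  have hP0 : ∀ x ∈ Set.Ioc (0:ℝ) 1, 0 ≤ P x := fun x hx =>
    div_nonneg (by have := (hbound x hx).2; linarith) (h1w x hx).le
  have hPcont : ContinuousOn P (Set.Ioc (0:ℝ) 1) :=
    (continuousOn_const.sub hcont).div (continuousOn_const.add hcont)
      (fun x hx => (h1w x hx).ne')
  have hPderiv : ∀ x ∈ Set.Ioo (0:ℝ) 1, HasDerivAt P (2 * P x / (x * s x)) x := by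
    intro x hx
    have hxIoc : x ∈ Set.Ioc (0:ℝ) 1 := ⟨hx.1, hx.2.le⟩
    have hw' : HasDerivAt w (deriv w x) x := (hdiff x hx).hasDerivAt
    have h1 : HasDerivAt (fun x => 1 - w x) (0 - deriv w x) x := (hasDerivAt_const x 1).sub hw'
    have h2 : HasDerivAt (fun x => 1 + w x) (0 + deriv w x) x := (hasDerivAt_const x 1).add hw'
    have hne := (h1w x hxIoc).ne'
    have hx0 : (0:ℝ) < x := hx.1
    have hsne := (hspos x hxIoc).ne'
    have hD : deriv w x = -(1 - (w x)^2) / (x * s x) := by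
      have hO := hode x hx
      rw [eq_div_iff (mul_ne_zero hx0.ne' hsne)]
      have hO' : s x * deriv w x * x = -(1 - (w x)^2) := by
        field_simp at hO
        linarith [hO]
      linear_combination hO'
    have hdiv := h1.div h2 hne
    refine hdiv.congr_deriv ?_
    rw [hD]
    simp only [hP_def]
    field_simp
    ring
  have h1mem : (1:ℝ) ∈ Set.Ioc (0:ℝ) 1 := ⟨one_pos, le_refl 1⟩
  intro y hy
  have hy0 : (0:ℝ) < y := hy.1
  constructor
  · -- lower bound, via MonotoneOn of P x * x ^ (-(2/a))
    set c : ℝ := 2 / a with hc_def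
    have hc : (0:ℝ) < c := by positivity
    have hmono : MonotoneOn (fun x => P x * x ^ (-c : ℝ)) (Set.Ioc (0:ℝ) 1) := by
      have hcF : ContinuousOn (fun x => P x * x ^ (-c:ℝ)) (Set.Ioc (0:ℝ) 1) :=
        hPcont.mul (ContinuousOn.rpow_const continuousOn_id fun x hx => Or.inl (ne_of_gt hx.1))
      have hder : ∀ x ∈ Set.Ioo (0:ℝ) 1,
          HasDerivAt (fun x => P x * x ^ (-c:ℝ))
            (2 * P x / (x * s x) * x ^ (-c:ℝ) + P x * (-c * x ^ (-c-1:ℝ))) x := by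
        intro x hx
        exact (hPderiv x hx).mul (Real.hasDerivAt_rpow_const (Or.inl (ne_of_gt hx.1)))
      apply monotoneOn_of_deriv_nonneg (convex_Ioc 0 1) hcF
      · rw [interior_Ioc]
        exact fun x hx => ((hder x hx).differentiableAt).differentiableWithinAt
      · rw [interior_Ioc]
        intro x hx
        rw [(hder x hx).deriv]
        have hxIoc : x ∈ Set.Ioc (0:ℝ) 1 := ⟨hx.1, hx.2.le⟩
        have hx0 : (0:ℝ) < x := hx.1
        have hsa := (hs_bounds x hxIoc).2
        have hsp := hspos x hxIoc
        have hPx := hP0 x hxIoc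
        have hB : (0:ℝ) < x ^ (-c-1:ℝ) := Real.rpow_pos_of_pos hx0 _
        have hsplit : x ^ (-c:ℝ) = x * x ^ (-c-1:ℝ) := by
          calc x ^ (-c:ℝ) = x ^ ((1:ℝ) + (-c-1)) := by congr 1; ring
            _ = x * x ^ (-c-1:ℝ) := by rw [Real.rpow_add hx0, Real.rpow_one]
        rw [hsplit]
        have h1 : 2 * P x / (x * s x) * (x * x ^ (-c-1:ℝ)) = (2 * P x / s x) * x ^ (-c-1:ℝ) := by
          field_simp
        rw [h1]
        have h2 : c * P x ≤ 2 * P x / s x := by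
          rw [le_div_iff₀ hsp]
          have hh : P x * s x ≤ P x * a := mul_le_mul_of_nonneg_left hsa hPx
          have hca : c * a = 2 := div_mul_cancel₀ 2 ha0.ne'
          nlinarith [mul_le_mul_of_nonneg_left hh hc.le]
        nlinarith [mul_le_mul_of_nonneg_right h2 hB.le]
    have hG1 : P 1 * (1:ℝ) ^ (-c:ℝ) = 1 := by
      simp [hP_def, hw1]
    have hGy : P y * y ^ (-c:ℝ) ≤ P 1 * (1:ℝ) ^ (-c:ℝ) := hmono hy h1mem hy.2
    rw [hG1] at hGy
    have hyc : (0:ℝ) < y ^ (c:ℝ) := Real.rpow_pos_of_pos hy0 _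
    have hinv : y ^ (-c:ℝ) * y ^ (c:ℝ) = 1 := by
      rw [← Real.rpow_add hy0]; norm_num
    have hPy : P y ≤ y ^ (c:ℝ) := by
      have h3 := mul_le_mul_of_nonneg_right hGy hyc.le
      have h4 : P y * y ^ (-c:ℝ) * y ^ (c:ℝ) = P y := by
        rw [mul_assoc, hinv, mul_one]
      linarith [h3, h4.symm.le]
    have hP' : (1 - w y) / (1 + w y) ≤ y ^ (c:ℝ) := hPy
    rw [div_le_iff₀ (h1w y hy)] at hP'
    rw [div_le_iff₀ (by positivity : (0:ℝ) < 1 + y ^ (2/a))]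
    have : y ^ (2/a) = y ^ (c:ℝ) := rfl
    rw [this]
    nlinarith [hP', (hbound y hy).1, hyc]
  · -- upper bound, via AntitoneOn of P x * x ^ (-2)
    have hanti : AntitoneOn (fun x => P x * x ^ (-2 : ℝ)) (Set.Ioc (0:ℝ) 1) := by
      have hcF : ContinuousOn (fun x => P x * x ^ (-2:ℝ)) (Set.Ioc (0:ℝ) 1) :=
        hPcont.mul (ContinuousOn.rpow_const continuousOn_id fun x hx => Or.inl (ne_of_gt hx.1))
      have hder : ∀ x ∈ Set.Ioo (0:ℝ) 1,
          HasDerivAt (fun x => P x * x ^ (-2:ℝ))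
            (2 * P x / (x * s x) * x ^ (-2:ℝ) + P x * (-2 * x ^ (-2-1:ℝ))) x := by
        intro x hx
        exact (hPderiv x hx).mul (Real.hasDerivAt_rpow_const (Or.inl (ne_of_gt hx.1)))
      apply antitoneOn_of_deriv_nonpos (convex_Ioc 0 1) hcF
      · rw [interior_Ioc]
        exact fun x hx => ((hder x hx).differentiableAt).differentiableWithinAt
      · rw [interior_Ioc]
        intro x hx
        rw [(hder x hx).deriv]
        have hxIoc : x ∈ Set.Ioc (0:ℝ) 1 := ⟨hx.1, hx.2.le⟩
        have hx0 : (0:ℝ) < x := hx.1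
        have hs1 := (hs_bounds x hxIoc).1
        have hsp := hspos x hxIoc
        have hPx := hP0 x hxIoc
        have hB : (0:ℝ) < x ^ (-2-1:ℝ) := Real.rpow_pos_of_pos hx0 _
        have hsplit : x ^ (-2:ℝ) = x * x ^ (-2-1:ℝ) := by
          calc x ^ (-2:ℝ) = x ^ ((1:ℝ) + (-2-1)) := by congr 1; ring
            _ = x * x ^ (-2-1:ℝ) := by rw [Real.rpow_add hx0, Real.rpow_one]
        rw [hsplit]
        have h1 : 2 * P x / (x * s x) * (x * x ^ (-2-1:ℝ)) = (2 * P x / s x) * x ^ (-2-1:ℝ) := by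
          field_simp
        rw [h1]
        have h2 : 2 * P x / s x ≤ 2 * P x := div_le_self (by linarith) hs1
        nlinarith [mul_le_mul_of_nonneg_right h2 hB.le]
    have hF1 : P 1 * (1:ℝ) ^ (-2:ℝ) = 1 := by
      simp [hP_def, hw1]
    have hFy : P 1 * (1:ℝ) ^ (-2:ℝ) ≤ P y * y ^ (-2:ℝ) := hanti hy h1mem hy.2
    rw [hF1] at hFy
    have hy2 : (0:ℝ) < y ^ (2:ℝ) := Real.rpow_pos_of_pos hy0 _
    have hinv : y ^ (-2:ℝ) * y ^ (2:ℝ) = 1 := by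
      rw [← Real.rpow_add hy0]; norm_num
    have hPy : y ^ (2:ℝ) ≤ P y := by
      have h3 := mul_le_mul_of_nonneg_right hFy hy2.le
      have h4 : P y * y ^ (-2:ℝ) * y ^ (2:ℝ) = P y := by
        rw [mul_assoc, hinv, mul_one]
      linarith [h3, h4.symm.le]
    have hsq : y ^ (2:ℝ) = y ^ 2 := by
      rw [show (2:ℝ) = ((2:ℕ):ℝ) by norm_num, Real.rpow_natCast]
    rw [hsq] at hPy
    have hP' : y ^ 2 ≤ (1 - w y) / (1 + w y) := hPy
    rw [le_div_iff₀ (h1w y hy)] at hP'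
    rw [le_div_iff₀ (by positivity : (0:ℝ) < 1 + y ^ 2)]
    nlinarith [hP', (hbound y hy).1, sq_nonneg y]
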